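/- Let V be a finite vertex type and G a connected simple graph on V. Then the kernel of the boundary map ∂ : (E(G) → ZMod 2) →ₗ (V → ZMod 2) is a ZMod 2-vector space of dimension |E(G)| − |V| + 1. -/
import Mathlib

open Finset in
/-- The boundary map over `ZMod 2`: `(∂ f) v` is the sum of `f e` over edges `e` of `G`
incident to `v`. -/
def boundary (V : Type*) [Fintype V] [DecidableEq V]
    (G : SimpleGraph V) [DecidableRel G.Adj] :
    (G.edgeSet → ZMod 2) →ₗ[ZMod 2] (V → ZMod 2) where
  toFun f v := ∑ e : G.edgeSet, if v ∈ (e : Sym2 V) then f e else 0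
  map_add' f g := by
    funext v
    simp only [Pi.add_apply]
    rw [← Finset.sum_add_distrib]
    congr 1; funext e
    split <;> simp
  map_smul' c f := by
    funext v
    simp only [Pi.smul_apply, smul_eq_mul, RingHom.id_apply]
    rw [Finset.mul_sum]
    congr 1; funext e
    split <;> simp

section aux

variable {V : Type*} [Fintype V] [DecidableEq V]

/-- The sum-of-coordinates map. -/
def sumMap (V : Type*) [Fintype V] : (V → ZMod 2) →ₗ[ZMod 2] ZMod 2 where
  toFun g := ∑ v, g v
  map_add' f g := by simp [Finset.sum_add_distrib]
  map_smul' c f := by simp [Finset.mul_sum]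

/-- Indicator of a vertex. -/
def chi (u : V) : V → ZMod 2 := fun w => if w = u then 1 else 0

variable (G : SimpleGraph V) [DecidableRel G.Adj]

lemma boundary_apply (f : G.edgeSet → ZMod 2) (v : V) :
    boundary V G f v = ∑ e : G.edgeSet, if v ∈ (e : Sym2 V) then f e else 0 := rfl

lemma range_le_ker : LinearMap.range (boundary V G) ≤ LinearMap.ker (sumMap V) := by
  rintro g ⟨f, rfl⟩
  show ∑ v, boundary V G f v = 0
  simp only [boundary_apply]
  rw [Finset.sum_comm]
  apply Finset.sum_eq_zero
  rintro ⟨e, he⟩ -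
  induction e using Sym2.ind with
  | _ a b =>
    have hadj : G.Adj a b := he
    have hab : a ≠ b := hadj.ne
    have key : ∀ v : V, (if v ∈ s(a, b) then f ⟨s(a, b), he⟩ else 0)
        = (if v = a then f ⟨s(a, b), he⟩ else 0) + (if v = b then f ⟨s(a, b), he⟩ else 0) := by
      intro v
      simp only [Sym2.mem_iff]
      rcases eq_or_ne v a with rfl | h1 <;> rcases eq_or_ne v b with rfl | h2 <;>
        simp_all
    rw [Finset.sum_congr rfl (fun v _ => key v), Finset.sum_add_distrib,
      Finset.sum_ite_eq' Finset.univ a, Finset.sum_ite_eq' Finset.univ b]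
    simp [CharTwo.add_self_eq_zero]

lemma chi_add_mem_of_adj {u v : V} (h : G.Adj u v) :
    chi u + chi v ∈ LinearMap.range (boundary V G) := by
  refine ⟨fun e => if e = ⟨s(u, v), h⟩ then 1 else 0, ?_⟩
  funext w
  have key : ∀ e : G.edgeSet,
      (if w ∈ (e : Sym2 V) then (if e = ⟨s(u, v), h⟩ then (1 : ZMod 2) else 0) else 0)
      = (if e = ⟨s(u, v), h⟩ then (if w ∈ s(u, v) then (1 : ZMod 2) else 0) else 0) := by
    rintro e
    rcases eq_or_ne e ⟨s(u, v), h⟩ with rfl | hne <;> simp_all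
  show ∑ e : G.edgeSet, _ = _
  rw [Finset.sum_congr rfl (fun e _ => key e), Finset.sum_ite_eq' Finset.univ]
  have huv : u ≠ v := h.ne
  simp only [Finset.mem_univ, if_true, Sym2.mem_iff, Pi.add_apply, chi]
  rcases eq_or_ne w u with rfl | h1 <;> rcases eq_or_ne w v with rfl | h2 <;> simp_all

lemma chi_add_self (u : V) : chi u + chi u = (0 : V → ZMod 2) :=
  funext fun _ => CharTwo.add_self_eq_zero _

lemma chi_add_mem_of_reachable {u v : V} (h : G.Reachable u v) :
    chi u + chi v ∈ LinearMap.range (boundary V G) := by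
  obtain ⟨p⟩ := h
  induction p with
  | nil =>
    rw [chi_add_self]; exact Submodule.zero_mem _
  | @cons a b c hab p ih =>
    have h1 := chi_add_mem_of_adj G hab
    have h2 := Submodule.add_mem _ h1 ih
    have : chi a + chi b + (chi b + chi c) = chi a + chi c := by
      have h3 : chi a + chi b + (chi b + chi c) = chi a + (chi b + chi b) + chi c := by ring
      rw [h3, chi_add_self, add_zero]
    rwa [this] at h2

lemma ker_le_range (hG : G.Connected) :
    LinearMap.ker (sumMap V) ≤ LinearMap.range (boundary V G) := by
  intro g hg
  obtain ⟨v₀⟩ := hG.nonempty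
  have hg' : ∑ v, g v = 0 := hg
  have hrep : g = ∑ u, g u • (chi u + chi v₀) := by
    funext w
    have : (∑ u, g u • (chi u + chi v₀)) w
        = ∑ u, (g u * (if w = u then 1 else 0) + g u * (if w = v₀ then 1 else 0)) := by
      simp [chi, mul_add]
    rw [this, Finset.sum_add_distrib]
    have e1 : ∑ u, g u * (if w = u then 1 else 0) = g w := by
      have hpt : ∀ u, g u * (if w = u then (1:ZMod 2) else 0) = if u = w then g u else 0 := by
        intro u
        rcases eq_or_ne u w with rfl | h
        · simp
        · simp [if_neg (Ne.symm h), if_neg h]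
      rw [Finset.sum_congr rfl fun u _ => hpt u, Finset.sum_ite_eq' Finset.univ]
      simp
    have e2 : ∑ u, g u * (if w = v₀ then (1:ZMod 2) else 0)
        = (∑ u, g u) * (if w = v₀ then 1 else 0) := by
      rw [Finset.sum_mul]
    rw [e1, e2, hg', zero_mul, add_zero]
  rw [hrep]
  exact Submodule.sum_mem _ fun u _ =>
    Submodule.smul_mem _ _ (chi_add_mem_of_reachable G (hG u v₀))

lemma range_eq (hG : G.Connected) :
    LinearMap.range (boundary V G) = LinearMap.ker (sumMap V) :=
  le_antisymm (range_le_ker G) (ker_le_range G hG)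

end aux

/-- For a connected simple graph `G` on a finite vertex type `V`, the kernel of
the boundary map over `ZMod 2` has dimension `|E(G)| - |V| + 1`. -/
theorem stmt_5 {V : Type*} [Fintype V] [DecidableEq V]
    (G : SimpleGraph V) [DecidableRel G.Adj] (hG : G.Connected) :
    (Module.finrank (ZMod 2) ↥(LinearMap.ker (boundary V G)) : ℤ) =
      (Fintype.card G.edgeSet : ℤ) - (Fintype.card V : ℤ) + 1 := by
  obtain ⟨v₀⟩ := hG.nonempty
  -- sumMap is surjective
  have hsurj : LinearMap.range (sumMap V) = ⊤ := by
    rw [LinearMap.range_eq_top]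
    intro c
    refine ⟨c • chi v₀, ?_⟩
    show ∑ v, (c • chi v₀) v = c
    simp [chi, Finset.sum_ite_eq' Finset.univ, mul_ite]
  have hrnS : Module.finrank (ZMod 2) ↥(LinearMap.range (sumMap V))
      + Module.finrank (ZMod 2) ↥(LinearMap.ker (sumMap V))
      = Module.finrank (ZMod 2) (V → ZMod 2) :=
    LinearMap.finrank_range_add_finrank_ker _
  rw [hsurj, finrank_top, Module.finrank_self, Module.finrank_fintype_fun_eq_card] at hrnS
  have hrnB : Module.finrank (ZMod 2) ↥(LinearMap.range (boundary V G))
      + Module.finrank (ZMod 2) ↥(LinearMap.ker (boundary V G))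
      = Module.finrank (ZMod 2) (G.edgeSet → ZMod 2) :=
    LinearMap.finrank_range_add_finrank_ker _
  rw [range_eq G hG, Module.finrank_fintype_fun_eq_card] at hrnB
  have hV : 1 ≤ Fintype.card V := Fintype.card_pos_iff.mpr ⟨v₀⟩
  omega
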